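/- Let q ≥ 2, k ≥ 2, λ the Perron eigenvalue of T_q(k-1) as above, v̄ the vector with v_j = λ^(j-1) - (q-1)·Σ_{i=0}^{j-2} λ^i, and w̄ the vector with w_j = λ^(k-j). Then v̄ is a right eigenvector and w̄ is a left eigenvector of T_q(k-1) for eigenvalue λ, and all entries of v̄ and w̄ are strictly positive; in particular v_k = (q-1)/λ. -/

import Mathlib

theorem stmt_14 (k q : ℕ) (hk : 2 ≤ k) (hq : 2 ≤ q) (lam : ℝ)
    (hlam1 : (q : ℝ) - 1 < lam) (hlam2 : lam < q)
    (hroot : lam ^ k = ((q : ℝ) - 1) * ∑ j ∈ Finset.range k, lam ^ j)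
    (T : Matrix (Fin k) (Fin k) ℝ)
    (hT : ∀ i j, T i j =
      if (j : ℕ) = 0 then (q : ℝ) - 1 else if (j : ℕ) = (i : ℕ) + 1 then 1 else 0)
    (v w : Fin k → ℝ)
    (hv : ∀ j, v j = lam ^ (j : ℕ) - ((q : ℝ) - 1) * ∑ i ∈ Finset.range (j : ℕ), lam ^ i)
    (hw : ∀ j, w j = lam ^ (k - 1 - (j : ℕ))) :
    T.mulVec v = lam • v ∧ Matrix.vecMul w T = lam • w ∧
    (∀ j, 0 < v j ∧ 0 < w j) ∧
    v ⟨k - 1, by omega⟩ = ((q : ℝ) - 1) / lam := by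
  have hq1 : (1:ℝ) ≤ (q:ℝ) - 1 := by
    have : (2:ℝ) ≤ (q:ℝ) := by exact_mod_cast hq
    linarith
  have hl1 : 1 < lam := lt_of_le_of_lt hq1 hlam1
  have hl0 : 0 < lam := by linarith
  have hne : lam - 1 ≠ 0 := by linarith
  have hgeom : ∀ n, ∑ i ∈ Finset.range n, lam ^ i = (lam ^ n - 1) / (lam - 1) :=
    fun n => geom_sum_eq (by linarith) n
  rw [hgeom] at hroot
  have hroot' : (lam - 1) * lam ^ k = ((q:ℝ) - 1) * (lam ^ k - 1) := by
    field_simp at hroot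
    linear_combination hroot
  have hpk : lam * lam ^ (k-1) = lam ^ k := by
    rw [← pow_succ']
    congr 1
    omega
  have hv' : ∀ j : Fin k, v j = lam ^ (j:ℕ) - ((q:ℝ)-1) * ((lam ^ (j:ℕ) - 1)/(lam - 1)) :=
    fun j => by rw [hv, hgeom]
  -- key identity at last coordinate
  have h4 : (lam - 1) * (lam * lam ^ (k-1)) = ((q:ℝ)-1) * (lam * lam ^ (k-1) - 1) := by
    rw [hpk]; exact hroot'
  have hvk : v ⟨k - 1, by omega⟩ = ((q : ℝ) - 1) / lam := by
    rw [hv' ⟨k-1, by omega⟩]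
    field_simp
    linear_combination h4
  -- positivity of v
  have hvpos : ∀ j : Fin k, 0 < v j := by
    intro j
    obtain ⟨d, hd, hd1⟩ : ∃ d, (j:ℕ) + d = k ∧ 1 ≤ d := ⟨k - (j:ℕ), by omega, by omega⟩
    have hdpow : 1 < lam ^ d := one_lt_pow₀ hl1 (by omega)
    have hpow : lam ^ (j:ℕ) * lam ^ d = lam ^ k := by rw [← pow_add, hd]
    have h2 : (lam - 1) * (lam ^ (j:ℕ) * lam ^ d) = ((q:ℝ)-1) * (lam ^ (j:ℕ) * lam ^ d - 1) := by
      rw [hpow]; exact hroot'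
    have key : (lam - 1) * lam ^ d * v j = ((q:ℝ)-1) * (lam ^ d - 1) := by
      rw [hv' j]
      field_simp
      linear_combination h2
    have hpos : 0 < (lam - 1) * lam ^ d := mul_pos (by linarith) (pow_pos hl0 d)
    have h3 : 0 < ((q:ℝ)-1) * (lam ^ d - 1) := mul_pos (by linarith) (by linarith)
    nlinarith [key, hpos, h3]
  -- mulVec
  have hmv : T.mulVec v = lam • v := by
    funext i
    simp only [Matrix.mulVec, dotProduct, Pi.smul_apply, smul_eq_mul]
    have hterm : ∀ j : Fin k, T i j * v j =
        (if (j:ℕ) = 0 then ((q:ℝ)-1) * 1 else 0) +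
        (if (j:ℕ) = (i:ℕ)+1 then
          lam ^ (j:ℕ) - ((q:ℝ)-1) * ((lam ^ (j:ℕ) - 1)/(lam - 1)) else 0) := by
      intro j
      rw [hT, hv' j]
      by_cases h0 : (j:ℕ) = 0
      · simp [h0]
      · by_cases h1 : (j:ℕ) = (i:ℕ)+1 <;> simp [h0, h1]
    rw [Finset.sum_congr rfl (fun j _ => hterm j), Finset.sum_add_distrib,
      Fin.sum_univ_eq_sum_range (fun n => if n = 0 then ((q:ℝ)-1) * 1 else 0),
      Fin.sum_univ_eq_sum_range (fun n => if n = (i:ℕ)+1 then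
        lam ^ n - ((q:ℝ)-1) * ((lam ^ n - 1)/(lam - 1)) else 0),
      Finset.sum_ite_eq' (Finset.range k) 0, Finset.sum_ite_eq' (Finset.range k) ((i:ℕ)+1)]
    rw [hv' i]
    simp only [Finset.mem_range]
    rw [if_pos (by omega : 0 < k)]
    by_cases hi : (i:ℕ) + 1 < k
    · rw [if_pos hi]
      field_simp
      ring
    · rw [if_neg hi]
      have hik : (i:ℕ) = k - 1 := by have := i.isLt; omega
      rw [hik]
      field_simp
      linear_combination -h4
  -- vecMul
  have hwv : Matrix.vecMul w T = lam • w := by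
    funext j
    simp only [Matrix.vecMul, dotProduct, Pi.smul_apply, smul_eq_mul]
    by_cases hj : (j:ℕ) = 0
    · have hterm : ∀ i : Fin k, w i * T i j = ((q:ℝ)-1) * lam ^ (k-1-(i:ℕ)) := by
        intro i
        rw [hT, hw, hj, if_pos rfl, mul_comm]
      rw [Finset.sum_congr rfl (fun i _ => hterm i), ← Finset.mul_sum,
        Fin.sum_univ_eq_sum_range (fun n => lam ^ (k-1-n)),
        Finset.sum_range_reflect (fun n => lam ^ n) k, hgeom, hw, hj]
      rw [Nat.sub_zero]
      linarith [hroot, hpk]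
    · obtain ⟨t, hjt⟩ : ∃ t, (j:ℕ) = t + 1 := ⟨(j:ℕ) - 1, by omega⟩
      have hterm : ∀ i : Fin k, w i * T i j = if (i:ℕ) = t then lam ^ (k-1-t) else 0 := by
        intro i
        rw [hT, hw, hjt]
        by_cases h : (i:ℕ) = t
        · simp [h]
        · have h2 : ¬ (t + 1 = (i:ℕ) + 1) := by omega
          simp [h2, h, Ne.symm h]
      rw [Finset.sum_congr rfl (fun i _ => hterm i),
        Fin.sum_univ_eq_sum_range (fun n => if n = t then lam ^ (k-1-t) else 0),
        Finset.sum_ite_eq' (Finset.range k) t]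
      have htk : t ∈ Finset.range k := Finset.mem_range.mpr (by have := j.isLt; omega)
      rw [if_pos htk, hw, hjt]
      have : k - 1 - t = (k - 1 - (t+1)) + 1 := by have := j.isLt; omega
      rw [this, pow_succ']
  exact ⟨hmv, hwv, fun j => ⟨hvpos j, by rw [hw]; exact pow_pos hl0 _⟩, hvk⟩
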